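/- There is no deterministic proper generator, making only membership queries (oracle access to the predicate 'x ∈ supp(h)'), that properly generates in the limit every countable hypothesis class over ℕ with all supports infinite. Formally: for every such generator G one can construct a countable class H = {h_1, h_2, ...} with each supp(h_i) ⊆ ℕ infinite and membership decidable, a target h* ∈ H, and an enumeration (x_t) of supp(h*) on which G outputs hypotheses ĥ_t with supp(ĥ_t) ⊄ supp(h*) at infinitely many times t. -/

import Mathlib

namespace S17

/-- default oracle: row i has support Evens ∪ {4i+1} -/
def F0 : (ℕ × ℕ) → Bool := fun p => (p.2 % 2 == 0) || (p.2 == 4 * p.1 + 1)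

structure St where
  tc : Finset (ℕ × ℕ)
  fc : Finset (ℕ × ℕ)
  cand : ℕ
  mark : ℕ
  queue : List ℕ
  xs : List ℕ
  fed : Finset ℕ
  B : ℕ

/-- oracle of a state -/
def oF (σ : St) : (ℕ × ℕ) → Bool := fun p =>
  if p ∈ σ.tc then true else if p ∈ σ.fc then false else F0 p

def init : St :=
  { tc := {(1,7)}, fc := {(0,1),(1,5)}, cand := 0, mark := 7,
    queue := [], xs := [], fed := ∅, B := 9 }

def xv (σ : St) (push : List ℕ) : ℕ :=
  if σ.xs.length % 2 = 1 then (σ.queue ++ push).headD 0 else σ.xs.length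

def q2 (σ : St) (push : List ℕ) : List ℕ :=
  if σ.xs.length % 2 = 1 then (σ.queue ++ push).tail else (σ.queue ++ push)

def promoSt (σ : St) (N : ℕ) : St :=
  { tc := (σ.tc ∪ {(σ.cand, 8*N+3), (1, 8*N+7)}) ∪
            (insert σ.mark σ.fed).image (fun m => (8*N+11, m)),
    fc := insert (8*N+11, 4*(8*N+11)+1) σ.fc,
    cand := 8*N+11, mark := 8*N+7,
    queue := q2 σ [σ.mark], xs := σ.xs ++ [xv σ [σ.mark]],
    fed := insert σ.mark σ.fed, B := 64*N+64 }

def calmSt (σ : St) (N : ℕ) : St :=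
  { σ with queue := q2 σ [], xs := σ.xs ++ [xv σ []], B := 64*N+64 }

section

variable (G : List ℕ → ((ℕ × ℕ) → Bool) → ℕ)
variable (hfin : ∀ (l : List ℕ) (F : (ℕ × ℕ) → Bool), ∃ Qs : Finset (ℕ × ℕ),
      ∀ F' : (ℕ × ℕ) → Bool, (∀ q ∈ Qs, F' q = F q) → G l F' = G l F)

def gS (σ : St) : ℕ := G σ.xs (oF σ)

noncomputable def QS (σ : St) : Finset (ℕ × ℕ) := Classical.choose (hfin σ.xs (oF σ))

noncomputable def NS (σ : St) : ℕ :=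
  σ.B + (QS G hfin σ).sup (fun p => p.1 + p.2) + gS G σ + σ.xs.length + 1

noncomputable def step (σ : St) : St :=
  if gS G σ = σ.cand then promoSt σ (NS G hfin σ) else calmSt σ (NS G hfin σ)

noncomputable def run : ℕ → St
  | 0 => init
  | t+1 => step G hfin (run t)

/-- the enumeration -/
noncomputable def x (n : ℕ) : ℕ := ((run G hfin (n+1)).xs).getD n 0

open Classical in
/-- the limit oracle -/
noncomputable def Finf : (ℕ × ℕ) → Bool := fun p =>
  if ∃ t, p ∈ (run G hfin t).tc then true
  else if ∃ t, p ∈ (run G hfin t).fc then false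
  else F0 p

end

/-- the big invariant -/
structure Inv (σ : St) : Prop where
  tcB : ∀ p ∈ σ.tc, p.1 + p.2 < σ.B
  fcB : ∀ p ∈ σ.fc, p.1 + p.2 < σ.B
  candB : σ.cand < σ.B
  markB : σ.mark < σ.B
  queueB : ∀ m ∈ σ.queue, m < σ.B
  fedB : ∀ m ∈ σ.fed, m < σ.B
  xsB : ∀ v ∈ σ.xs, v < σ.B
  lenB : σ.xs.length < σ.B
  B9 : 9 ≤ σ.B
  tc4 : ∀ p ∈ σ.tc, p.2 % 4 = 3
  fc4 : ∀ p ∈ σ.fc, p.2 = 4 * p.1 + 1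
  mark8 : σ.mark % 8 = 7
  fed8 : ∀ m ∈ σ.fed, m % 8 = 7
  queueFed : ∀ m ∈ σ.queue, m ∈ σ.fed
  markNotFed : σ.mark ∉ σ.fed
  candFc : (σ.cand, 4*σ.cand+1) ∈ σ.fc
  candTc : ∀ m, ((σ.cand, m) ∈ σ.tc ↔ m ∈ σ.fed)
  tauTc : ∀ m, ((1, m) ∈ σ.tc ↔ (m ∈ σ.fed ∨ m = σ.mark))
  candNe1 : σ.cand ≠ 1
  junkCover : ∀ r, (r, 4*r+1) ∈ σ.fc →
    r = σ.cand ∨ r = 1 ∨ ∃ v, (r, v) ∈ σ.tc ∧ v % 8 = 3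
  xsFed : ∀ v ∈ σ.xs, v % 2 = 0 ∨ v ∈ σ.fed

lemma inv_init : Inv init where
  tcB := by simp [init]
  fcB := by rintro p hp; simp [init] at hp; rcases hp with h | h <;> subst h <;> simp [init]
  candB := by simp [init]
  markB := by simp [init]
  queueB := by simp [init]
  fedB := by simp [init]
  xsB := by simp [init]
  lenB := by simp [init]
  B9 := by simp [init]
  tc4 := by simp [init]
  fc4 := by rintro p hp; simp [init] at hp; rcases hp with h | h <;> subst h <;> simp
  mark8 := by simp [init]
  fed8 := by simp [init]
  queueFed := by simp [init]
  markNotFed := by simp [init]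
  candFc := by simp [init]
  candTc := by intro m; simp [init]
  tauTc := by intro m; simp [init]
  candNe1 := by simp [init]
  junkCover := by
    rintro r hr; simp [init] at hr
    rcases hr with h | h
    · left; rw [show r = 0 from by omega]; simp [init]
    · right; left; omega
  xsFed := by simp [init]


lemma mem_q2 {σ : St} {push : List ℕ} {a : ℕ} (h : a ∈ q2 σ push) :
    a ∈ σ.queue ∨ a ∈ push := by
  unfold q2 at h
  split at h
  · exact List.mem_append.1 (List.mem_of_mem_tail h)
  · exact List.mem_append.1 h

lemma xv_spec (σ : St) (push : List ℕ) :
    (xv σ push = σ.xs.length ∧ σ.xs.length % 2 = 0) ∨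
    xv σ push = 0 ∨ xv σ push ∈ σ.queue ∨ xv σ push ∈ push := by
  unfold xv
  split
  · rename_i h
    cases hq : σ.queue ++ push with
    | nil => right; left; simp [hq]
    | cons a l =>
        right; right
        have ha : a ∈ σ.queue ++ push := by simp [hq]
        simpa [hq] using List.mem_append.1 ha
  · rename_i h; left; exact ⟨rfl, by omega⟩

lemma inv_calm {σ : St} (h : Inv σ) {N : ℕ} (hN : σ.B ≤ N) : Inv (calmSt σ N) := by
  have hB : σ.B ≤ 64*N+64 := by omega
  refine {
    tcB := fun p hp => lt_of_lt_of_le (h.tcB p hp) hB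
    fcB := fun p hp => lt_of_lt_of_le (h.fcB p hp) hB
    candB := lt_of_lt_of_le h.candB hB
    markB := lt_of_lt_of_le h.markB hB
    queueB := fun m hm => ?_
    fedB := fun m hm => lt_of_lt_of_le (h.fedB m hm) hB
    xsB := fun v hv => ?_
    lenB := ?_
    B9 := by show (9:ℕ) ≤ 64*N+64; omega
    tc4 := h.tc4
    fc4 := h.fc4
    mark8 := h.mark8
    fed8 := h.fed8
    queueFed := fun m hm => ?_
    markNotFed := h.markNotFed
    candFc := h.candFc
    candTc := h.candTc
    tauTc := h.tauTc
    candNe1 := h.candNe1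
    junkCover := h.junkCover
    xsFed := fun v hv => ?_ }
  · rcases mem_q2 hm with hm' | hm'
    · exact lt_of_lt_of_le (h.queueB m hm') hB
    · simp at hm'
  · rcases List.mem_append.1 hv with hv' | hv'
    · exact lt_of_lt_of_le (h.xsB v hv') hB
    · simp at hv'; subst hv'
      rcases xv_spec σ [] with ⟨he, _⟩ | he | he | he
      · rw [he]; exact lt_of_lt_of_le h.lenB hB
      · rw [he]; show (0:ℕ) < 64*N+64; have := h.B9; omega
      · exact lt_of_lt_of_le (h.queueB _ he) hB
      · simp at he
  · show (σ.xs ++ [xv σ []]).length < (64*N+64:ℕ)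
    rw [List.length_append]
    have := h.lenB; simp; omega
  · rcases mem_q2 hm with hm' | hm'
    · exact h.queueFed m hm'
    · simp at hm'
  · rcases List.mem_append.1 hv with hv' | hv'
    · exact h.xsFed v hv'
    · simp at hv'; subst hv'
      rcases xv_spec σ [] with ⟨he, he2⟩ | he | he | he
      · left; rw [he]; exact he2
      · left; omega
      · right; exact h.queueFed _ he
      · simp at he


lemma mem_promo_tc {σ : St} {N : ℕ} {p : ℕ × ℕ} :
    p ∈ (promoSt σ N).tc ↔
      p ∈ σ.tc ∨ p = (σ.cand, 8*N+3) ∨ p = (1, 8*N+7) ∨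
      ∃ m, (m = σ.mark ∨ m ∈ σ.fed) ∧ p = (8*N+11, m) := by
  show p ∈ (σ.tc ∪ {(σ.cand, 8*N+3), (1, 8*N+7)}) ∪
      (insert σ.mark σ.fed).image (fun m => (8*N+11, m)) ↔ _
  simp only [Finset.mem_union, Finset.mem_insert, Finset.mem_image,
    Finset.mem_singleton]
  constructor
  · rintro ((h | h | h) | ⟨m, hm, hp⟩)
    · exact Or.inl h
    · exact Or.inr (Or.inl h)
    · exact Or.inr (Or.inr (Or.inl h))
    · exact Or.inr (Or.inr (Or.inr ⟨m, by simpa using hm, hp.symm⟩))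
  · rintro (h | h | h | ⟨m, hm, hp⟩)
    · exact Or.inl (Or.inl h)
    · exact Or.inl (Or.inr (Or.inl h))
    · exact Or.inl (Or.inr (Or.inr h))
    · exact Or.inr ⟨m, by simpa using hm, hp.symm⟩

lemma mem_promo_fc {σ : St} {N : ℕ} {p : ℕ × ℕ} :
    p ∈ (promoSt σ N).fc ↔ p = (8*N+11, 4*(8*N+11)+1) ∨ p ∈ σ.fc := by
  show p ∈ insert (8*N+11, 4*(8*N+11)+1) σ.fc ↔ _
  simp [Finset.mem_insert]

lemma inv_promo {σ : St} (h : Inv σ) {N : ℕ} (hN : σ.B ≤ N) : Inv (promoSt σ N) := by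
  have hB9 := h.B9
  have hB : σ.B ≤ 64*N+64 := by omega
  have hc := h.candB
  have hm := h.markB
  refine {
    tcB := fun p hp => ?_
    fcB := fun p hp => ?_
    candB := by show (8*N+11:ℕ) < 64*N+64; omega
    markB := by show (8*N+7:ℕ) < 64*N+64; omega
    queueB := fun m hm' => ?_
    fedB := fun m hm' => ?_
    xsB := fun v hv => ?_
    lenB := ?_
    B9 := by show (9:ℕ) ≤ 64*N+64; omega
    tc4 := fun p hp => ?_
    fc4 := fun p hp => ?_
    mark8 := by show (8*N+7) % 8 = 7; omega
    fed8 := fun m hm' => ?_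
    queueFed := fun m hm' => ?_
    markNotFed := ?_
    candFc := ?_
    candTc := fun m => ?_
    tauTc := fun m => ?_
    candNe1 := by show (8*N+11:ℕ) ≠ 1; omega
    junkCover := fun r hr => ?_
    xsFed := fun v hv => ?_ }
  · rcases mem_promo_tc.1 hp with h' | h' | h' | ⟨m', hm', h'⟩
    · exact lt_of_lt_of_le (h.tcB p h') hB
    · subst h'; show σ.cand + (8*N+3) < 64*N+64; omega
    · subst h'; show 1 + (8*N+7) < 64*N+64; omega
    · subst h'
      have : m' < σ.B := by
        rcases hm' with rfl | hm' ; exact hm; exact h.fedB _ hm'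
      show (8*N+11) + m' < 64*N+64; omega
  · rcases mem_promo_fc.1 hp with h' | h'
    · subst h'; show (8*N+11) + (4*(8*N+11)+1) < 64*N+64; omega
    · exact lt_of_lt_of_le (h.fcB p h') hB
  · rcases mem_q2 hm' with h' | h'
    · exact lt_of_lt_of_le (h.queueB m h') hB
    · simp at h'; subst h'; exact lt_of_lt_of_le hm hB
  · show m < 64*N+64
    rcases Finset.mem_insert.1 hm' with rfl | h'
    · omega
    · exact lt_of_lt_of_le (h.fedB m h') hB
  · show v < 64*N+64
    rcases List.mem_append.1 hv with h' | h'
    · exact lt_of_lt_of_le (h.xsB v h') hB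
    · simp at h'; subst h'
      rcases xv_spec σ [σ.mark] with ⟨he, _⟩ | he | he | he
      · rw [he]; exact lt_of_lt_of_le h.lenB hB
      · omega
      · exact lt_of_lt_of_le (h.queueB _ he) hB
      · simp at he; omega
  · show (σ.xs ++ [xv σ [σ.mark]]).length < (64*N+64:ℕ)
    rw [List.length_append]
    have := h.lenB; simp; omega
  · rcases mem_promo_tc.1 hp with h' | h' | h' | ⟨m', hm', h'⟩
    · exact h.tc4 p h'
    · subst h'; show (8*N+3) % 4 = 3; omega
    · subst h'; show (8*N+7) % 4 = 3; omega
    · subst h'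
      have : m' % 8 = 7 := by
        rcases hm' with rfl | hm'; exact h.mark8; exact h.fed8 _ hm'
      show m' % 4 = 3; omega
  · rcases mem_promo_fc.1 hp with h' | h'
    · subst h'; rfl
    · exact h.fc4 p h'
  · rcases Finset.mem_insert.1 hm' with rfl | h'
    · exact h.mark8
    · exact h.fed8 m h'
  · rcases mem_q2 hm' with h' | h'
    · exact Finset.mem_insert_of_mem (h.queueFed m h')
    · simp at h'; subst h'; exact Finset.mem_insert_self _ _
  · show (8*N+7 : ℕ) ∉ insert σ.mark σ.fed
    intro hcon
    rcases Finset.mem_insert.1 hcon with h' | h'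
    · omega
    · have := h.fedB _ h'; omega
  · exact mem_promo_fc.2 (Or.inl rfl)
  · constructor
    · intro hp
      rcases mem_promo_tc.1 hp with h' | h' | h' | ⟨m', hm', h'⟩
      · exfalso; have : (8*N+11 : ℕ) + m < σ.B := h.tcB _ h'; omega
      · exfalso; have : (8*N+11 : ℕ) = σ.cand := congrArg Prod.fst h'; omega
      · exfalso; have : (8*N+11 : ℕ) = 1 := congrArg Prod.fst h'; omega
      · have : m = m' := congrArg Prod.snd h'
        subst this
        rcases hm' with rfl | hm'
        · exact Finset.mem_insert_self _ _
        · exact Finset.mem_insert_of_mem hm'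
    · intro hp
      refine mem_promo_tc.2 (Or.inr (Or.inr (Or.inr ⟨m, ?_, rfl⟩)))
      rcases Finset.mem_insert.1 hp with rfl | h'
      · exact Or.inl rfl
      · exact Or.inr h'
  · constructor
    · intro hp
      rcases mem_promo_tc.1 hp with h' | h' | h' | ⟨m', hm', h'⟩
      · rcases (h.tauTc m).1 h' with h'' | h''
        · exact Or.inl (Finset.mem_insert_of_mem h'')
        · exact Or.inl (h'' ▸ Finset.mem_insert_self _ _)
      · exfalso; have : (1:ℕ) = σ.cand := congrArg Prod.fst h'; exact h.candNe1 this.symm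
      · have : m = 8*N+7 := congrArg Prod.snd h'; exact Or.inr this
      · exfalso; have : (1:ℕ) = 8*N+11 := congrArg Prod.fst h'; omega
    · rintro (hp | rfl)
      · rcases Finset.mem_insert.1 hp with rfl | h'
        · exact mem_promo_tc.2 (Or.inl ((h.tauTc _).2 (Or.inr rfl)))
        · exact mem_promo_tc.2 (Or.inl ((h.tauTc _).2 (Or.inl h')))
      · exact mem_promo_tc.2 (Or.inr (Or.inr (Or.inl rfl)))
  · rcases mem_promo_fc.1 hr with h' | h'
    · left
      have : r = 8*N+11 := by
        have h1 := congrArg Prod.fst h'; simp at h1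
        exact h1
      exact this
    · rcases h.junkCover r h' with rfl | h'' | ⟨v, hv, hv8⟩
      · right; right
        exact ⟨8*N+3, mem_promo_tc.2 (Or.inr (Or.inl rfl)), by omega⟩
      · right; left; exact h''
      · right; right; exact ⟨v, mem_promo_tc.2 (Or.inl hv), hv8⟩
  · rcases List.mem_append.1 hv with h' | h'
    · rcases h.xsFed v h' with h'' | h''
      · exact Or.inl h''
      · exact Or.inr (Finset.mem_insert_of_mem h'')
    · simp at h'; subst h'
      rcases xv_spec σ [σ.mark] with ⟨he, he2⟩ | he | he | he
      · left; rw [he]; exact he2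
      · left; omega
      · right; exact Finset.mem_insert_of_mem (h.queueFed _ he)
      · right; simp at he; rw [he]; exact Finset.mem_insert_self _ _


section Main

variable (G : List ℕ → ((ℕ × ℕ) → Bool) → ℕ)
variable (hfin : ∀ (l : List ℕ) (F : (ℕ × ℕ) → Bool), ∃ Qs : Finset (ℕ × ℕ),
      ∀ F' : (ℕ × ℕ) → Bool, (∀ q ∈ Qs, F' q = F q) → G l F' = G l F)

lemma run_succ (t : ℕ) : run G hfin (t+1) = step G hfin (run G hfin t) := rfl

lemma NS_ge (σ : St) : σ.B ≤ NS G hfin σ := by unfold NS; omega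

lemma inv_run : ∀ t, Inv (run G hfin t) := by
  intro t
  induction t with
  | zero => exact inv_init
  | succ t ih =>
      rw [run_succ]; unfold step
      split
      · exact inv_promo ih (NS_ge G hfin _)
      · exact inv_calm ih (NS_ge G hfin _)

lemma B_succ (t : ℕ) :
    (run G hfin (t+1)).B = 64 * NS G hfin (run G hfin t) + 64 := by
  rw [run_succ]; unfold step; split <;> rfl

lemma B_mono {t u : ℕ} (h : t ≤ u) : (run G hfin t).B ≤ (run G hfin u).B := by
  induction u with
  | zero => have : t = 0 := by omega
            subst this; exact le_refl _
  | succ u ih =>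
      rcases Nat.lt_or_ge t (u+1) with h' | h'
      · have h2 : t ≤ u := by omega
        have := ih h2
        have h3 := B_succ G hfin u
        have h4 := NS_ge G hfin (run G hfin u)
        omega
      · have : t = u + 1 := by omega
        subst this; exact le_refl _

lemma NS_lt_B {t u : ℕ} (h : t < u) :
    NS G hfin (run G hfin t) < (run G hfin u).B := by
  have h1 : (run G hfin (t+1)).B ≤ (run G hfin u).B := B_mono G hfin (by omega)
  have h2 := B_succ G hfin t
  omega

lemma NS_mono {t u : ℕ} (h : t ≤ u) :
    NS G hfin (run G hfin t) ≤ NS G hfin (run G hfin u) := by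
  rcases Nat.lt_or_ge t u with h' | h'
  · have := NS_lt_B G hfin h'
    have := NS_ge G hfin (run G hfin u)
    omega
  · have : t = u := by omega
    subst this; rfl

lemma tc_sub_succ (t : ℕ) : (run G hfin t).tc ⊆ (run G hfin (t+1)).tc := by
  rw [run_succ]; unfold step; split
  · intro p hp; exact mem_promo_tc.2 (Or.inl hp)
  · intro p hp; exact hp

lemma fc_sub_succ (t : ℕ) : (run G hfin t).fc ⊆ (run G hfin (t+1)).fc := by
  rw [run_succ]; unfold step; split
  · intro p hp; exact mem_promo_fc.2 (Or.inr hp)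
  · intro p hp; exact hp

lemma fed_sub_succ (t : ℕ) : (run G hfin t).fed ⊆ (run G hfin (t+1)).fed := by
  rw [run_succ]; unfold step; split
  · intro m hm; exact Finset.mem_insert_of_mem hm
  · intro m hm; exact hm

lemma tc_mono {t u : ℕ} (h : t ≤ u) : (run G hfin t).tc ⊆ (run G hfin u).tc := by
  induction u with
  | zero => have : t = 0 := by omega
            subst this; exact Finset.Subset.refl _
  | succ u ih =>
      rcases Nat.lt_or_ge t (u+1) with h' | h'
      · exact Finset.Subset.trans (ih (by omega)) (tc_sub_succ G hfin u)
      · have : t = u + 1 := by omega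
        subst this; exact Finset.Subset.refl _

lemma fc_mono {t u : ℕ} (h : t ≤ u) : (run G hfin t).fc ⊆ (run G hfin u).fc := by
  induction u with
  | zero => have : t = 0 := by omega
            subst this; exact Finset.Subset.refl _
  | succ u ih =>
      rcases Nat.lt_or_ge t (u+1) with h' | h'
      · exact Finset.Subset.trans (ih (by omega)) (fc_sub_succ G hfin u)
      · have : t = u + 1 := by omega
        subst this; exact Finset.Subset.refl _

lemma fed_mono {t u : ℕ} (h : t ≤ u) : (run G hfin t).fed ⊆ (run G hfin u).fed := by
  induction u with
  | zero => have : t = 0 := by omega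
            subst this; exact Finset.Subset.refl _
  | succ u ih =>
      rcases Nat.lt_or_ge t (u+1) with h' | h'
      · exact Finset.Subset.trans (ih (by omega)) (fed_sub_succ G hfin u)
      · have : t = u + 1 := by omega
        subst this; exact Finset.Subset.refl _

lemma tc_new {t : ℕ} {p : ℕ × ℕ} (hp : p ∈ (run G hfin (t+1)).tc) :
    p ∈ (run G hfin t).tc ∨ 8 * NS G hfin (run G hfin t) + 3 ≤ p.1 + p.2 := by
  rw [run_succ] at hp; unfold step at hp
  split at hp
  · rcases mem_promo_tc.1 hp with h' | h' | h' | ⟨m, hm, h'⟩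
    · exact Or.inl h'
    · right; rw [h']; simp <;> omega
    · right; rw [h']; simp <;> omega
    · right; rw [h']; simp <;> omega
  · exact Or.inl hp

lemma fc_new {t : ℕ} {p : ℕ × ℕ} (hp : p ∈ (run G hfin (t+1)).fc) :
    p ∈ (run G hfin t).fc ∨ 8 * NS G hfin (run G hfin t) + 3 ≤ p.1 + p.2 := by
  rw [run_succ] at hp; unfold step at hp
  split at hp
  · rcases mem_promo_fc.1 hp with h' | h'
    · right; rw [h']; simp <;> omega
    · exact Or.inl h'
  · exact Or.inl hp

lemma tc_up {t u : ℕ} (h : t ≤ u) {p : ℕ × ℕ} (hp : p ∈ (run G hfin u).tc) :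
    p ∈ (run G hfin t).tc ∨ NS G hfin (run G hfin t) < p.1 + p.2 := by
  induction u with
  | zero => left; have : t = 0 := by omega
            subst this; exact hp
  | succ u ih =>
      rcases Nat.lt_or_ge t (u+1) with h' | h'
      · rcases tc_new G hfin hp with h2 | h2
        · exact ih (by omega) h2
        · right
          have := NS_mono G hfin (show t ≤ u by omega)
          omega
      · have : t = u + 1 := by omega
        subst this; exact Or.inl hp

lemma fc_up {t u : ℕ} (h : t ≤ u) {p : ℕ × ℕ} (hp : p ∈ (run G hfin u).fc) :
    p ∈ (run G hfin t).fc ∨ NS G hfin (run G hfin t) < p.1 + p.2 := by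
  induction u with
  | zero => left; have : t = 0 := by omega
            subst this; exact hp
  | succ u ih =>
      rcases Nat.lt_or_ge t (u+1) with h' | h'
      · rcases fc_new G hfin hp with h2 | h2
        · exact ih (by omega) h2
        · right
          have := NS_mono G hfin (show t ≤ u by omega)
          omega
      · have : t = u + 1 := by omega
        subst this; exact Or.inl hp

lemma Ftc_small {t : ℕ} {p : ℕ × ℕ} (hp : p.1 + p.2 < NS G hfin (run G hfin t)) :
    (∃ u, p ∈ (run G hfin u).tc) ↔ p ∈ (run G hfin t).tc := by
  constructor
  · rintro ⟨u, hu⟩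
    rcases le_or_gt u t with h | h
    · exact tc_mono G hfin h hu
    · rcases tc_up G hfin (le_of_lt h) hu with h' | h'
      · exact h'
      · omega
  · exact fun h => ⟨t, h⟩

lemma Ffc_small {t : ℕ} {p : ℕ × ℕ} (hp : p.1 + p.2 < NS G hfin (run G hfin t)) :
    (∃ u, p ∈ (run G hfin u).fc) ↔ p ∈ (run G hfin t).fc := by
  constructor
  · rintro ⟨u, hu⟩
    rcases le_or_gt u t with h | h
    · exact fc_mono G hfin h hu
    · rcases fc_up G hfin (le_of_lt h) hu with h' | h'
      · exact h'
      · omega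
  · exact fun h => ⟨t, h⟩

lemma Finf_small {t : ℕ} {p : ℕ × ℕ} (hp : p.1 + p.2 < NS G hfin (run G hfin t)) :
    Finf G hfin p = oF (run G hfin t) p := by
  unfold Finf oF
  by_cases h1 : ∃ u, p ∈ (run G hfin u).tc
  · rw [if_pos h1, if_pos ((Ftc_small G hfin hp).1 h1)]
  · rw [if_neg h1]
    have h1' : p ∉ (run G hfin t).tc := fun hc => h1 ⟨t, hc⟩
    rw [if_neg h1']
    by_cases h2 : ∃ u, p ∈ (run G hfin u).fc
    · rw [if_pos h2, if_pos ((Ffc_small G hfin hp).1 h2)]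
    · have h2' : p ∉ (run G hfin t).fc := fun hc => h2 ⟨t, hc⟩
      rw [if_neg h2, if_neg h2']

lemma out_eq (t : ℕ) :
    G ((run G hfin t).xs) (Finf G hfin) = gS G (run G hfin t) := by
  apply Classical.choose_spec (hfin ((run G hfin t).xs) (oF (run G hfin t)))
  intro q hq
  have hq' : q ∈ QS G hfin (run G hfin t) := hq
  apply Finf_small
  have h2 : q.1 + q.2 ≤ (QS G hfin (run G hfin t)).sup (fun p : ℕ × ℕ => p.1 + p.2) :=
    Finset.le_sup (f := fun p : ℕ × ℕ => p.1 + p.2) hq'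
  unfold NS
  omega

end Main


section Main2

variable (G : List ℕ → ((ℕ × ℕ) → Bool) → ℕ)
variable (hfin : ∀ (l : List ℕ) (F : (ℕ × ℕ) → Bool), ∃ Qs : Finset (ℕ × ℕ),
      ∀ F' : (ℕ × ℕ) → Bool, (∀ q ∈ Qs, F' q = F q) → G l F' = G l F)

/-- the push list at stage t -/
noncomputable def pushT (t : ℕ) : List ℕ :=
  if gS G (run G hfin t) = (run G hfin t).cand then [(run G hfin t).mark] else []

lemma xs_step (t : ℕ) :
    (run G hfin (t+1)).xs = (run G hfin t).xs ++ [xv (run G hfin t) (pushT G hfin t)] := by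
  rw [run_succ]; unfold step pushT
  split
  · rfl
  · rfl

lemma queue_step (t : ℕ) :
    (run G hfin (t+1)).queue = q2 (run G hfin t) (pushT G hfin t) := by
  rw [run_succ]; unfold step pushT
  split
  · rfl
  · rfl

lemma fed_step (t : ℕ) :
    (run G hfin (t+1)).fed =
      if gS G (run G hfin t) = (run G hfin t).cand then
        insert (run G hfin t).mark (run G hfin t).fed
      else (run G hfin t).fed := by
  rw [run_succ]; unfold step
  split
  · rfl
  · rfl

lemma xs_len (t : ℕ) : (run G hfin t).xs.length = t := by
  induction t with
  | zero => rfl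
  | succ t ih => rw [xs_step, List.length_append, ih]; rfl

lemma getD_last (l : List ℕ) (a : ℕ) : (l ++ [a]).getD l.length 0 = a := by
  rw [List.getD_eq_getElem?_getD, List.getElem?_append_right (le_refl _)]
  simp

lemma x_val (t : ℕ) : x G hfin t = xv (run G hfin t) (pushT G hfin t) := by
  unfold x
  rw [xs_step]
  have h := xs_len G hfin t
  calc ((run G hfin t).xs ++ [xv (run G hfin t) (pushT G hfin t)]).getD t 0
      = ((run G hfin t).xs ++ [xv (run G hfin t) (pushT G hfin t)]).getD
          ((run G hfin t).xs.length) 0 := by rw [h]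
    _ = _ := getD_last _ _

lemma x_even {t : ℕ} (h : t % 2 = 0) : x G hfin t = t := by
  rw [x_val]
  unfold xv
  rw [xs_len]
  rw [if_neg (by omega)]

lemma range_map (t : ℕ) : (List.range t).map (x G hfin) = (run G hfin t).xs := by
  induction t with
  | zero => rfl
  | succ t ih =>
      rw [List.range_succ, List.map_append, ih, xs_step]
      simp [x_val]

lemma x_odd_val {t : ℕ} (h : t % 2 = 1) :
    x G hfin t = ((run G hfin t).queue ++ pushT G hfin t).headD 0 ∧
    (run G hfin (t+1)).queue = ((run G hfin t).queue ++ pushT G hfin t).tail := by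
  constructor
  · rw [x_val]; unfold xv; rw [xs_len, if_pos h]
  · rw [queue_step]; unfold q2; rw [xs_len, if_pos h]

lemma x_even_val {t : ℕ} (h : t % 2 = 0) :
    (run G hfin (t+1)).queue = (run G hfin t).queue ++ pushT G hfin t := by
  rw [queue_step]; unfold q2; rw [xs_len, if_neg (by omega)]

/-- drain: queue elements at odd stages eventually appear in x -/
lemma drain_aux : ∀ n : ℕ, ∀ t, t % 2 = 1 → ∀ a (l₁ l₂ : List ℕ),
    (run G hfin t).queue = l₁ ++ a :: l₂ → l₁.length = n →
    ∃ u, t ≤ u ∧ x G hfin u = a := by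
  intro n
  induction n with
  | zero =>
      intro t ht a l₁ l₂ hq hl
      have hl₁ : l₁ = [] := List.length_eq_zero_iff.1 hl
      subst hl₁
      refine ⟨t, le_refl t, ?_⟩
      rw [(x_odd_val G hfin ht).1, hq]
      simp
  | succ n ih =>
      intro t ht a l₁ l₂ hq hl
      cases l₁ with
      | nil => simp at hl
      | cons b l₁' =>
          -- at stage t (odd) : head b is popped
          have h2 : (run G hfin (t+1)).queue =
              l₁' ++ a :: (l₂ ++ pushT G hfin t) := by
            rw [(x_odd_val G hfin ht).2, hq]
            simp
          -- stage t+1 is even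
          have h3 : (run G hfin (t+2)).queue =
              l₁' ++ a :: (l₂ ++ pushT G hfin t ++ pushT G hfin (t+1)) := by
            rw [x_even_val G hfin (by omega), h2]
            simp
          have h4 : (t+2) % 2 = 1 := by omega
          obtain ⟨u, hu, hx⟩ := ih (t+2) h4 a l₁' _ h3 (by simpa using hl)
          exact ⟨u, by omega, hx⟩

lemma mem_queue_x {t : ℕ} {a : ℕ} (h : a ∈ (run G hfin t).queue) :
    ∃ u, x G hfin u = a := by
  rcases Nat.even_or_odd t with he | ho
  · have he' : t % 2 = 0 := Nat.even_iff.1 he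
    have h2 : a ∈ (run G hfin (t+1)).queue := by
      rw [x_even_val G hfin he']
      exact List.mem_append_left _ h
    obtain ⟨l₁, l₂, hdec⟩ := List.append_of_mem h2
    obtain ⟨u, _, hx⟩ := drain_aux G hfin l₁.length (t+1) (by omega) a l₁ l₂ hdec rfl
    exact ⟨u, hx⟩
  · have ho' : t % 2 = 1 := Nat.odd_iff.1 ho
    obtain ⟨l₁, l₂, hdec⟩ := List.append_of_mem h
    obtain ⟨u, _, hx⟩ := drain_aux G hfin l₁.length t ho' a l₁ l₂ hdec rfl
    exact ⟨u, hx⟩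

lemma fed_x : ∀ u, ∀ m ∈ (run G hfin u).fed, ∃ v, x G hfin v = m := by
  intro u
  induction u with
  | zero => intro m hm; simp [run, init] at hm
  | succ u ih =>
      intro m hm
      rw [fed_step] at hm
      by_cases hp : gS G (run G hfin u) = (run G hfin u).cand
      · rw [if_pos hp] at hm
        rcases Finset.mem_insert.1 hm with he | hm'
        · -- m is the mark pushed at stage u
          have hpush : pushT G hfin u = [(run G hfin u).mark] := by
            unfold pushT; rw [if_pos hp]
          rw [he]
          rcases Nat.even_or_odd u with hev | hod
          · have hev' : u % 2 = 0 := Nat.even_iff.1 hev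
            have h2 : (run G hfin u).mark ∈ (run G hfin (u+1)).queue := by
              rw [x_even_val G hfin hev', hpush]
              simp
            exact mem_queue_x G hfin h2
          · have ho' : u % 2 = 1 := Nat.odd_iff.1 hod
            have h1 := (x_odd_val G hfin ho').1
            have h2 := (x_odd_val G hfin ho').2
            rw [hpush] at h1 h2
            cases hq : (run G hfin u).queue with
            | nil =>
                rw [hq] at h1; simp at h1
                exact ⟨u, h1⟩
            | cons b l =>
                have h3 : (run G hfin u).mark ∈ (run G hfin (u+1)).queue := by
                  rw [h2, hq]; simp
                exact mem_queue_x G hfin h3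
        · exact ih m hm'
      · rw [if_neg hp] at hm
        exact ih m hm

lemma x_mem_xs (n : ℕ) : x G hfin n ∈ (run G hfin (n+1)).xs := by
  unfold x
  have h : n < (run G hfin (n+1)).xs.length := by rw [xs_len]; omega
  rw [List.getD_eq_getElem _ _ h]
  exact List.getElem_mem _

end Main2


section Final

variable (G : List ℕ → ((ℕ × ℕ) → Bool) → ℕ)
variable (hfin : ∀ (l : List ℕ) (F : (ℕ × ℕ) → Bool), ∃ Qs : Finset (ℕ × ℕ),
      ∀ F' : (ℕ × ℕ) → Bool, (∀ q ∈ Qs, F' q = F q) → G l F' = G l F)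

lemma Finf_true_of_tc {p : ℕ × ℕ} (h : ∃ u, p ∈ (run G hfin u).tc) :
    Finf G hfin p = true := by
  unfold Finf; rw [if_pos h]

lemma Finf_true_of_F0 {p : ℕ × ℕ} (h2 : ¬ ∃ u, p ∈ (run G hfin u).fc)
    (h3 : F0 p = true) : Finf G hfin p = true := by
  by_cases h1 : ∃ u, p ∈ (run G hfin u).tc
  · unfold Finf; rw [if_pos h1]
  · unfold Finf; rw [if_neg h1, if_neg h2]; exact h3

lemma Finf_false_char {p : ℕ × ℕ} (h1 : ¬ ∃ u, p ∈ (run G hfin u).tc)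
    (h3 : F0 p = false) : Finf G hfin p = false := by
  by_cases h2 : ∃ u, p ∈ (run G hfin u).fc
  · unfold Finf; rw [if_neg h1, if_pos h2]
  · unfold Finf; rw [if_neg h1, if_neg h2]; exact h3

lemma Finf_false_of_fc {p : ℕ × ℕ} (h1 : ¬ ∃ u, p ∈ (run G hfin u).tc)
    (h2 : ∃ u, p ∈ (run G hfin u).fc) : Finf G hfin p = false := by
  unfold Finf
  rw [if_neg h1, if_pos h2]

lemma not_tc_of_mod {i j : ℕ} (h : j % 4 ≠ 3) :
    ¬ ∃ u, (i, j) ∈ (run G hfin u).tc := by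
  rintro ⟨u, hu⟩
  exact h ((inv_run G hfin u).tc4 _ hu)

lemma even_mem (i k : ℕ) (hk : k % 2 = 0) : Finf G hfin (i, k) = true := by
  apply Finf_true_of_F0
  · rintro ⟨u, hu⟩
    have := (inv_run G hfin u).fc4 _ hu
    simp at this
    omega
  · unfold F0
    simp
    left; omega

lemma supp_infinite (i : ℕ) : {j | Finf G hfin (i, j) = true}.Infinite := by
  apply Set.infinite_of_injective_forall_mem (f := fun k : ℕ => 2 * k)
  · intro a b hab; simpa using hab
  · intro a
    simp only [Set.mem_setOf_eq]
    exact even_mem G hfin i (2*a) (by omega)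

/-- the promotion predicate -/
def promoP (t : ℕ) : Prop := gS G (run G hfin t) = (run G hfin t).cand

lemma calm_pres {t : ℕ} (h : ¬ promoP G hfin t) :
    (run G hfin (t+1)).tc = (run G hfin t).tc ∧
    (run G hfin (t+1)).fc = (run G hfin t).fc ∧
    (run G hfin (t+1)).cand = (run G hfin t).cand ∧
    (run G hfin (t+1)).mark = (run G hfin t).mark ∧
    (run G hfin (t+1)).fed = (run G hfin t).fed := by
  unfold promoP at h
  rw [run_succ]; unfold step
  rw [if_neg h]
  exact ⟨rfl, rfl, rfl, rfl, rfl⟩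

lemma promo_tc {t : ℕ} (h : promoP G hfin t) :
    ((run G hfin t).cand, 8 * NS G hfin (run G hfin t) + 3) ∈ (run G hfin (t+1)).tc := by
  unfold promoP at h
  rw [run_succ]; unfold step
  rw [if_pos h]
  exact mem_promo_tc.2 (Or.inr (Or.inl rfl))

lemma stabA {T : ℕ} (hT : ∀ w, T ≤ w → ¬ promoP G hfin w) :
    ∀ t, T ≤ t →
    (run G hfin t).tc = (run G hfin T).tc ∧
    (run G hfin t).fc = (run G hfin T).fc ∧
    (run G hfin t).cand = (run G hfin T).cand ∧
    (run G hfin t).mark = (run G hfin T).mark ∧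
    (run G hfin t).fed = (run G hfin T).fed := by
  intro t ht
  induction t with
  | zero =>
      have : T = 0 := by omega
      subst this; exact ⟨rfl, rfl, rfl, rfl, rfl⟩
  | succ t ih =>
      rcases Nat.lt_or_ge T (t+1) with h' | h'
      · have ht' : T ≤ t := by omega
        obtain ⟨e1, e2, e3, e4, e5⟩ := ih ht'
        obtain ⟨f1, f2, f3, f4, f5⟩ := calm_pres G hfin (hT t ht')
        exact ⟨f1.trans e1, f2.trans e2, f3.trans e3, f4.trans e4, f5.trans e5⟩
      · have : T = t + 1 := by omega
        subst this; exact ⟨rfl, rfl, rfl, rfl, rfl⟩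

/-- Case A : finitely many promotions -/
lemma caseA {T : ℕ} (hT : ∀ w, T ≤ w → ¬ promoP G hfin w) :
    ∃ (istar : ℕ),
      (∀ t, x G hfin t ∈ {j | Finf G hfin (istar, j) = true}) ∧
      (∀ j, Finf G hfin (istar, j) = true → ∃ t, x G hfin t = j) ∧
      (∀ T₀ : ℕ, ∃ t, T₀ ≤ t ∧
        ¬ {j | Finf G hfin (G ((List.range t).map (x G hfin)) (Finf G hfin), j) = true} ⊆
            {j | Finf G hfin (istar, j) = true}) := by
  set c := (run G hfin T).cand with hc
  have I := inv_run G hfin T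
  -- tc/fc/fed stability
  have tcS : ∀ u, (run G hfin u).tc ⊆ (run G hfin T).tc := by
    intro u
    rcases le_or_gt u T with h | h
    · exact tc_mono G hfin h
    · rw [(stabA G hfin hT u (le_of_lt h)).1]
  have fcS : ∀ u, (run G hfin u).fc ⊆ (run G hfin T).fc := by
    intro u
    rcases le_or_gt u T with h | h
    · exact fc_mono G hfin h
    · rw [(stabA G hfin hT u (le_of_lt h)).2.1]
  have fedS : ∀ u, (run G hfin u).fed ⊆ (run G hfin T).fed := by
    intro u
    rcases le_or_gt u T with h | h
    · exact fed_mono G hfin h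
    · rw [(stabA G hfin hT u (le_of_lt h)).2.2.2.2]
  refine ⟨c, ?_, ?_, ?_⟩
  · -- soundness of the enumeration
    intro n
    simp only [Set.mem_setOf_eq]
    have hx := (inv_run G hfin (n+1)).xsFed _ (x_mem_xs G hfin n)
    rcases hx with h' | h'
    · exact even_mem G hfin c _ h'
    · apply Finf_true_of_tc
      exact ⟨T, (I.candTc _).2 (fedS (n+1) h')⟩
  · -- completeness of the enumeration
    intro j hj
    unfold Finf at hj
    split at hj
    · rename_i h'
      obtain ⟨u, hu⟩ := h'
      have : (c, j) ∈ (run G hfin T).tc := tcS u hu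
      have hjf : j ∈ (run G hfin T).fed := (I.candTc _).1 this
      exact fed_x G hfin T j hjf
    · split at hj
      · simp at hj
      · rename_i h1 h2
        unfold F0 at hj
        simp at hj
        rcases hj with hj | hj
        · exact ⟨j, x_even G hfin hj⟩
        · exfalso; exact h2 ⟨T, hj ▸ I.candFc⟩
  · -- infinitely many bad stages
    intro T₀
    refine ⟨max T₀ T, le_max_left _ _, ?_⟩
    set t := max T₀ T with htdef
    have htT : T ≤ t := le_max_right _ _
    rw [range_map G hfin t, out_eq G hfin t]
    set g := gS G (run G hfin t) with hg
    have hgc : g ≠ c := by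
      intro hcon
      apply hT t htT
      unfold promoP
      rw [← hg, hcon, hc, (stabA G hfin hT t htT).2.2.1]
    rw [Set.not_subset]
    -- find the witness element
    by_cases hg1 : g = 1
    · -- the tracker : use its unfed mark
      refine ⟨(run G hfin T).mark, ?_, ?_⟩
      · simp only [Set.mem_setOf_eq]
        exact Finf_true_of_tc G hfin ⟨T, hg1 ▸ ((I.tauTc _).2 (Or.inr rfl))⟩
      · simp only [Set.mem_setOf_eq]
        rw [Finf_false_char]
        · simp
        · rintro ⟨u, hu⟩
          have : (c, (run G hfin T).mark) ∈ (run G hfin T).tc := tcS u hu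
          exact I.markNotFed ((I.candTc _).1 this)
        · unfold F0
          simp
          constructor
          · have := I.mark8; omega
          · intro hcon
            have h8 := I.mark8
            omega
    · by_cases hg2 : ∃ v, (g, v) ∈ (run G hfin T).tc ∧ v % 8 = 3
      · -- a junked row
        obtain ⟨v, hv, hv8⟩ := hg2
        refine ⟨v, ?_, ?_⟩
        · simp only [Set.mem_setOf_eq]
          exact Finf_true_of_tc G hfin ⟨T, hv⟩
        · simp only [Set.mem_setOf_eq]
          rw [Finf_false_char]
          · simp
          · rintro ⟨u, hu⟩
            have : (c, v) ∈ (run G hfin T).tc := tcS u hu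
            have := I.fed8 _ ((I.candTc _).1 this)
            omega
          · unfold F0
            simp
            constructor
            · omega
            · intro hcon; omega
      · -- a default row : use its canonical junk
        refine ⟨4*g+1, ?_, ?_⟩
        · simp only [Set.mem_setOf_eq]
          apply Finf_true_of_F0
          · rintro ⟨u, hu⟩
            have hfcT : (g, 4*g+1) ∈ (run G hfin T).fc := fcS u hu
            rcases I.junkCover g hfcT with h' | h' | ⟨v, hv, hv8⟩
            · exact hgc (h' ▸ rfl)
            · exact hg1 h'
            · exact hg2 ⟨v, hv, hv8⟩
          · unfold F0; simp
        · simp only [Set.mem_setOf_eq]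
          rw [Finf_false_char]
          · simp
          · apply not_tc_of_mod; omega
          · unfold F0
            simp
            constructor
            · omega
            · intro hcon; omega

end Final


section FinalB

variable (G : List ℕ → ((ℕ × ℕ) → Bool) → ℕ)
variable (hfin : ∀ (l : List ℕ) (F : (ℕ × ℕ) → Bool), ∃ Qs : Finset (ℕ × ℕ),
      ∀ F' : (ℕ × ℕ) → Bool, (∀ q ∈ Qs, F' q = F q) → G l F' = G l F)

lemma mark_const {u : ℕ} : ∀ d, (∀ w, u ≤ w → w < u + d → ¬ promoP G hfin w) →
    (run G hfin (u+d)).mark = (run G hfin u).mark := by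
  intro d
  induction d with
  | zero => intro _; rfl
  | succ d ih =>
      intro h
      have h1 : ¬ promoP G hfin (u+d) := h (u+d) (by omega) (by omega)
      have h2 := (calm_pres G hfin h1).2.2.2.1
      have h3 : u + (d+1) = (u+d) + 1 := by omega
      rw [h3, h2]
      exact ih (fun w hw hw2 => h w hw (by omega))

lemma mark_fed (hinf : {t | promoP G hfin t}.Infinite) (u : ℕ) :
    ∃ w, (run G hfin u).mark ∈ (run G hfin w).fed := by
  classical
  have hex : ∃ s, u ≤ s ∧ promoP G hfin s := by
    obtain ⟨b, hb, hb2⟩ := hinf.exists_gt u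
    exact ⟨b, le_of_lt hb2, hb⟩
  set s := Nat.find hex with hs
  obtain ⟨hs1, hs2⟩ := Nat.find_spec hex
  have hmin : ∀ w, u ≤ w → w < s → ¬ promoP G hfin w := by
    intro w hw hws hP
    exact Nat.find_min hex hws ⟨hw, hP⟩
  have hconst : (run G hfin s).mark = (run G hfin u).mark := by
    have : s = u + (s - u) := by omega
    rw [this]
    exact mark_const G hfin (s-u) (fun w hw hw2 => hmin w hw (by omega))
  refine ⟨s+1, ?_⟩
  rw [fed_step]
  unfold promoP at hs2
  rw [if_pos (show gS G (run G hfin s) = (run G hfin s).cand from hs2), ← hconst]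
  exact Finset.mem_insert_self _ _

/-- Case B : infinitely many promotions; the tracker row 1 is the target -/
lemma caseB (hinf : {t | promoP G hfin t}.Infinite) :
    ∃ (istar : ℕ),
      (∀ t, x G hfin t ∈ {j | Finf G hfin (istar, j) = true}) ∧
      (∀ j, Finf G hfin (istar, j) = true → ∃ t, x G hfin t = j) ∧
      (∀ T₀ : ℕ, ∃ t, T₀ ≤ t ∧
        ¬ {j | Finf G hfin (G ((List.range t).map (x G hfin)) (Finf G hfin), j) = true} ⊆
            {j | Finf G hfin (istar, j) = true}) := by
  refine ⟨1, ?_, ?_, ?_⟩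
  · intro n
    simp only [Set.mem_setOf_eq]
    have hx := (inv_run G hfin (n+1)).xsFed _ (x_mem_xs G hfin n)
    rcases hx with h' | h'
    · exact even_mem G hfin 1 _ h'
    · apply Finf_true_of_tc
      exact ⟨n+1, ((inv_run G hfin (n+1)).tauTc _).2 (Or.inl h')⟩
  · intro j hj
    by_cases h1 : ∃ u, (1, j) ∈ (run G hfin u).tc
    · obtain ⟨u, hu⟩ := h1
      rcases ((inv_run G hfin u).tauTc j).1 hu with hf | hm
      · exact fed_x G hfin u j hf
      · obtain ⟨w, hw⟩ := mark_fed G hfin hinf u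
        rw [← hm] at hw
        exact fed_x G hfin w j hw
    · by_cases h2 : ∃ u, (1, j) ∈ (run G hfin u).fc
      · rw [Finf_false_of_fc G hfin h1 h2] at hj
        simp at hj
      · unfold Finf at hj
        rw [if_neg h1, if_neg h2] at hj
        unfold F0 at hj
        simp at hj
        rcases hj with hj | hj
        · exact ⟨j, x_even G hfin hj⟩
        · exfalso
          apply h2
          refine ⟨0, ?_⟩
          have : j = 5 := by omega
          subst this
          show (1, 5) ∈ init.fc
          simp [init]
  · intro T₀
    obtain ⟨t, htP, htgt⟩ := hinf.exists_gt T₀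
    refine ⟨t, le_of_lt htgt, ?_⟩
    rw [range_map G hfin t, out_eq G hfin t]
    have htP' : gS G (run G hfin t) = (run G hfin t).cand := htP
    rw [htP']
    rw [Set.not_subset]
    have hN9 : 9 ≤ NS G hfin (run G hfin t) :=
      le_trans (inv_run G hfin t).B9 (NS_ge G hfin _)
    set v := 8 * NS G hfin (run G hfin t) + 3 with hv
    refine ⟨v, ?_, ?_⟩
    · simp only [Set.mem_setOf_eq]
      exact Finf_true_of_tc G hfin ⟨t+1, promo_tc G hfin htP⟩
    · simp only [Set.mem_setOf_eq]
      rw [Finf_false_char]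
      · simp
      · rintro ⟨u, hu⟩
        rcases ((inv_run G hfin u).tauTc v).1 hu with hf | hm
        · have := (inv_run G hfin u).fed8 _ hf
          omega
        · have := (inv_run G hfin u).mark8
          omega
      · unfold F0
        simp
        constructor
        · omega
        · intro hcon; omega

end FinalB


/-- There is no deterministic proper generator, using only membership queries, that
properly generates in the limit every countable hypothesis class over ℕ with all
supports infinite. -/
theorem statement17' (G : List ℕ → ((ℕ × ℕ) → Bool) → ℕ)
    (hfin : ∀ (l : List ℕ) (F : (ℕ × ℕ) → Bool), ∃ Qs : Finset (ℕ × ℕ),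
      ∀ F' : (ℕ × ℕ) → Bool, (∀ q ∈ Qs, F' q = F q) → G l F' = G l F) :
    ∃ (F : (ℕ × ℕ) → Bool) (istar : ℕ) (x : ℕ → ℕ),
      (∀ i : ℕ, {j | F (i, j) = true}.Infinite) ∧
      (∀ t, x t ∈ {j | F (istar, j) = true}) ∧
      (∀ j, F (istar, j) = true → ∃ t, x t = j) ∧
      (∀ T : ℕ, ∃ t, T ≤ t ∧
        ¬ {j | F (G ((List.range t).map x) F, j) = true} ⊆
            {j | F (istar, j) = true}) := by
  by_cases hinf : {t | promoP G hfin t}.Infinite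
  · obtain ⟨istar, h2, h3, h4⟩ := caseB G hfin hinf
    exact ⟨Finf G hfin, istar, x G hfin, supp_infinite G hfin, h2, h3, h4⟩
  · have hfinP : {t | promoP G hfin t}.Finite := Set.not_infinite.1 hinf
    obtain ⟨T, hT⟩ : ∃ T, ∀ w, T ≤ w → ¬ promoP G hfin w := by
      rcases hfinP.bddAbove with ⟨b, hb⟩
      refine ⟨b+1, fun w hw hP => ?_⟩
      have := hb hP
      omega
    obtain ⟨istar, h2, h3, h4⟩ := caseA G hfin hT
    exact ⟨Finf G hfin, istar, x G hfin, supp_infinite G hfin, h2, h3, h4⟩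

end S17

/-- There is no deterministic proper generator, using only membership queries, that
properly generates in the limit every countable hypothesis class over ℕ with all
supports infinite.  A membership-query generator is modeled as a map
`G : List ℕ → ((ℕ × ℕ) → Bool) → ℕ` taking the example sequence and a membership
oracle `F` (where `F (i, j) = true` iff `j ∈ supp(h_i)`) and returning the index of
its output hypothesis; making only finitely many queries is captured by the
condition that the output depends on finitely many oracle values.  For every such
generator there is a class (given by a decidable membership function `F`), a target
index, and an enumeration of the target's support on which the generator
overgeneralizes at infinitely many times. -/
theorem statement17 (G : List ℕ → ((ℕ × ℕ) → Bool) → ℕ)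
    (hfin : ∀ (l : List ℕ) (F : (ℕ × ℕ) → Bool), ∃ Qs : Finset (ℕ × ℕ),
      ∀ F' : (ℕ × ℕ) → Bool, (∀ q ∈ Qs, F' q = F q) → G l F' = G l F) :
    ∃ (F : (ℕ × ℕ) → Bool) (istar : ℕ) (x : ℕ → ℕ),
      (∀ i : ℕ, {j | F (i, j) = true}.Infinite) ∧
      (∀ t, x t ∈ {j | F (istar, j) = true}) ∧
      (∀ j, F (istar, j) = true → ∃ t, x t = j) ∧
      (∀ T : ℕ, ∃ t, T ≤ t ∧
        ¬ {j | F (G ((List.range t).map x) F, j) = true} ⊆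
            {j | F (istar, j) = true}) :=
  S17.statement17' G hfin
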